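/- The kernel coefficient $\mathscr{G}^{hh}_{i,i',j,j'} = \int_{x_{i'}-h/2}^{x_{i'}+h/2} \int_{y_{j'}-h/2}^{y_{j'}+h/2} \frac{dx' dy'}{\sqrt{(x_i - x')^2 + (y_j - y')^2}}$ equals the closed form $|x_+| \sinh^{-1}(y_+/x_+) + |y_+| \sinh^{-1}(x_+/y_+) - |x_-| \sinh^{-1}(y_+/x_-) - |y_+| \sinh^{-1}(x_- /y_+) - |x_+| \sinh^{-1}(y_- /x_+) - |y_-| \sinh^{-1}(x_+/y_-) + |x_-| \sinh^{-1}(y_- /x_-) + |y_-| \sinh^{-1}(x_- /y_-)$, where $x_{\pm} = x_i - x_{i'} \pm h/2$ and $y_{\pm} = y_j - y_{j'} \pm h/2$, whenever all $x_\pm, y_\pm$ are nonzero. -/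

import Mathlib

open Real MeasureTheory intervalIntegral Set Filter Topology

noncomputable def Fc (c v : ℝ) : ℝ := |v| * Real.arsinh (c / v) + |c| * Real.arsinh (v / c)

lemma sqrt_aux (c : ℝ) {v : ℝ} (hv : v ≠ 0) :
    Real.sqrt (v ^ 2 + c ^ 2) = Real.sqrt (1 + (c / v) ^ 2) * |v| := by
  rw [← Real.sqrt_sq_eq_abs, ← Real.sqrt_mul (by positivity)]
  congr 1
  field_simp

lemma log_bound (c : ℝ) {w : ℝ} (hw : w ≠ 0) :
    Real.log (1 + 2 * (|c| / |w|)) = Real.log (|w| + 2 * |c|) - Real.log w := by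
  have hw0 : 0 < |w| := abs_pos.2 hw
  rw [← Real.log_abs w,
    ← Real.log_div (by positivity) (abs_ne_zero.2 hw)]
  congr 1
  field_simp

lemma arsinh_abs (x : ℝ) : |Real.arsinh x| = Real.arsinh |x| := by
  rcases le_or_gt 0 x with h | h
  · rw [abs_of_nonneg h, abs_of_nonneg (Real.arsinh_nonneg_iff.2 h)]
  · rw [abs_of_neg h, abs_of_neg (Real.arsinh_neg_iff.2 h), ← Real.arsinh_neg]

lemma abs_arsinh_le (x : ℝ) : |Real.arsinh x| ≤ Real.log (1 + 2 * |x|) := by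
  rw [arsinh_abs]
  have h1 : Real.arsinh |x| = Real.log (|x| + Real.sqrt (1 + |x| ^ 2)) := rfl
  rw [h1]
  apply Real.log_le_log (by positivity)
  have h2 : Real.sqrt (1 + |x| ^ 2) ≤ 1 + |x| := by
    rw [show (1 : ℝ) + |x| = Real.sqrt ((1 + |x|) ^ 2) from (Real.sqrt_sq (by positivity)).symm]
    apply Real.sqrt_le_sqrt
    nlinarith [abs_nonneg x]
  linarith

lemma hasDerivAt_Fc (c : ℝ) (hc : c ≠ 0) {v : ℝ} (hv : v ≠ 0) :
    HasDerivAt (Fc c) (Real.arsinh (c / |v|)) v := by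
  have hs : 0 < Real.sqrt (v ^ 2 + c ^ 2) := Real.sqrt_pos.2 (by positivity)
  have h1 : HasDerivAt (fun v : ℝ => c / v) (-(c / v ^ 2)) v := by
    have := (hasDerivAt_inv hv).const_mul c
    simpa [div_eq_mul_inv, mul_comm] using this
  have h2 : HasDerivAt (fun v : ℝ => Real.arsinh (c / v))
      ((Real.sqrt (1 + (c / v) ^ 2))⁻¹ * -(c / v ^ 2)) v := h1.arsinh
  have h3 : HasDerivAt (fun v : ℝ => v / c) (1 / c) v := by
    simpa using (hasDerivAt_id v).div_const c
  have h4 : HasDerivAt (fun v : ℝ => Real.arsinh (v / c))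
      ((Real.sqrt (1 + (v / c) ^ 2))⁻¹ * (1 / c)) v := h3.arsinh
  have e1 : Real.sqrt (1 + (c / v) ^ 2) = Real.sqrt (v ^ 2 + c ^ 2) / |v| := by
    rw [sqrt_aux c hv]
    field_simp
  have e2 : Real.sqrt (1 + (v / c) ^ 2) = Real.sqrt (v ^ 2 + c ^ 2) / |c| := by
    rw [add_comm (v ^ 2) (c ^ 2), sqrt_aux v hc]
    field_simp
  rcases hv.lt_or_gt with hv0 | hv0
  · -- v < 0
    have habs : |v| = -v := abs_of_neg hv0
    have hg : HasDerivAt (fun v : ℝ => -v * Real.arsinh (c / v) + |c| * Real.arsinh (v / c))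
        (-1 * Real.arsinh (c / v) + -v * ((Real.sqrt (1 + (c / v) ^ 2))⁻¹ * -(c / v ^ 2))
          + |c| * ((Real.sqrt (1 + (v / c) ^ 2))⁻¹ * (1 / c))) v := by
      exact ((hasDerivAt_id v).neg.mul h2).add (h4.const_mul |c|)
    have heq : Fc c =ᶠ[nhds v]
        fun v : ℝ => -v * Real.arsinh (c / v) + |c| * Real.arsinh (v / c) := by
      filter_upwards [Iio_mem_nhds hv0] with w hw
      simp [Fc, abs_of_neg (mem_Iio.1 hw)]
    have hFc := hg.congr_of_eventuallyEq heq
    refine hFc.congr_deriv ?_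
    symm
    rw [e1, e2, habs, show c / -v = -(c / v) by rw [div_neg], Real.arsinh_neg]
    have hca : |c| ≠ 0 := abs_ne_zero.2 hc
    have hva : (-v : ℝ) ≠ 0 := by simpa using hv
    field_simp
    nlinarith [abs_mul_abs_self c, abs_mul_abs_self v, hs, sq_abs c, sq_abs v]
  · -- 0 < v
    have habs : |v| = v := abs_of_pos hv0
    have hg : HasDerivAt (fun v : ℝ => v * Real.arsinh (c / v) + |c| * Real.arsinh (v / c))
        (1 * Real.arsinh (c / v) + v * ((Real.sqrt (1 + (c / v) ^ 2))⁻¹ * -(c / v ^ 2))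
          + |c| * ((Real.sqrt (1 + (v / c) ^ 2))⁻¹ * (1 / c))) v := by
      exact ((hasDerivAt_id v).mul h2).add (h4.const_mul |c|)
    have heq : Fc c =ᶠ[nhds v]
        fun v : ℝ => v * Real.arsinh (c / v) + |c| * Real.arsinh (v / c) := by
      filter_upwards [Ioi_mem_nhds hv0] with w hw
      simp [Fc, abs_of_pos (mem_Ioi.1 hw)]
    have hFc := hg.congr_of_eventuallyEq heq
    refine hFc.congr_deriv ?_
    symm
    rw [e1, e2, habs]
    have hca : |c| ≠ 0 := abs_ne_zero.2 hc
    field_simp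
    nlinarith [abs_mul_abs_self c, hs]

lemma continuous_Fc (c : ℝ) (hc : c ≠ 0) : Continuous (Fc c) := by
  have hc2 : Continuous fun v : ℝ => |c| * Real.arsinh (v / c) :=
    continuous_const.mul ((continuous_id.div_const c).arsinh)
  rw [continuous_iff_continuousAt]
  intro v
  rcases eq_or_ne v 0 with rfl | hv
  · have key : Tendsto (fun v : ℝ => |v| * Real.arsinh (c / v)) (nhds 0) (nhds 0) := by
      apply squeeze_zero_norm
        (a := fun v : ℝ => |v| * Real.log (|v| + 2 * |c|) - |v| * Real.log v)
      · intro w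
        rcases eq_or_ne w 0 with rfl | hw
        · simp
        · have h1 : ‖|w| * Real.arsinh (c / w)‖ ≤ |w| * Real.log (1 + 2 * |c / w|) := by
            rw [Real.norm_eq_abs, abs_mul, abs_abs]
            exact mul_le_mul_of_nonneg_left (abs_arsinh_le _) (abs_nonneg w)
          have h2 : Real.log (1 + 2 * |c / w|) = Real.log (|w| + 2 * |c|) - Real.log w := by
            rw [abs_div]
            exact log_bound c hw
          rw [h2] at h1
          linarith [h1, mul_sub (|w|) (Real.log (|w| + 2 * |c|)) (Real.log w)]
      · have t1 : Tendsto (fun v : ℝ => |v| * Real.log (|v| + 2 * |c|)) (nhds 0) (nhds 0) := by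
          have hca : (0 : ℝ) < 2 * |c| := by positivity
          have : ContinuousAt (fun v : ℝ => |v| * Real.log (|v| + 2 * |c|)) 0 := by
            apply continuous_abs.continuousAt.mul
            exact (Real.continuousAt_log (by simp [hca.ne'])).comp
              (by fun_prop)
          simpa using this.tendsto
        have t2 : Tendsto (fun v : ℝ => |v| * Real.log v) (nhds 0) (nhds 0) := by
          have h := (Real.continuous_mul_log.comp continuous_abs).continuousAt (x := 0)
          simp only [ContinuousAt, Function.comp] at h
          simp only [abs_zero, zero_mul] at h
          have : (fun v : ℝ => |v| * Real.log v) = fun v : ℝ => |v| * Real.log |v| := by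
            funext w
            rw [Real.log_abs]
          rw [this]
          exact h
        simpa using t1.sub t2
    have k1 : ContinuousAt (fun v : ℝ => |v| * Real.arsinh (c / v)) 0 := by
      rw [ContinuousAt]
      simpa using key
    have : ContinuousAt (fun v : ℝ => |v| * Real.arsinh (c / v) + |c| * Real.arsinh (v / c)) 0 :=
      k1.add hc2.continuousAt
    exact this
  · exact (hasDerivAt_Fc c hc hv).continuousAt

lemma intervalIntegrable_log01 : IntervalIntegrable Real.log volume 0 1 := by
  have h : IntervalIntegrable (fun x : ℝ => -Real.log x) volume 0 1 := by
    apply intervalIntegrable_deriv_of_nonneg (g := fun x : ℝ => x - x * Real.log x)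
    · exact (continuous_id.sub Real.continuous_mul_log).continuousOn
    · intro x hx
      simp only [min_eq_left zero_le_one, max_eq_right zero_le_one] at hx
      have h1 : HasDerivAt (fun x : ℝ => x * Real.log x) (Real.log x + 1) x := by
        have := (hasDerivAt_id x).mul (Real.hasDerivAt_log (ne_of_gt hx.1))
        refine this.congr_deriv ?_
        field_simp [ne_of_gt hx.1]
        simp only [id]
        ring
      have := (hasDerivAt_id x).sub h1
      refine this.congr_deriv ?_
      ring
    · intro x hx
      simp only [min_eq_left zero_le_one, max_eq_right zero_le_one] at hx
      simp only [neg_nonneg]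
      exact Real.log_nonpos hx.1.le hx.2.le
  have h2 := h.neg
  have heq : (-fun x : ℝ => -Real.log x) = Real.log := by
    funext x
    simp
  rwa [heq] at h2

lemma intervalIntegrable_log_all (a b : ℝ) : IntervalIntegrable Real.log volume a b := by
  set M : ℝ := max 1 (max |a| |b|) with hM
  have hM1 : (1 : ℝ) ≤ M := le_max_left _ _
  have hM0 : (0 : ℝ) < M := lt_of_lt_of_le one_pos hM1
  have h0M : IntervalIntegrable Real.log volume 0 M := by
    refine intervalIntegrable_log01.trans ?_
    apply intervalIntegrable_log
    rw [Set.uIcc_of_le hM1]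
    intro h
    exact absurd h.1 (by norm_num)
  have hneg : IntervalIntegrable Real.log volume (-M) 0 := by
    have := (IntervalIntegrable.iff_comp_neg (by simp)).mp h0M
    have heq : (fun x : ℝ => Real.log (-x)) = Real.log := by
      funext x
      rw [Real.log_neg_eq_log]
    rw [heq] at this
    simpa using this.symm
  have hbig : IntervalIntegrable Real.log volume (-M) M := hneg.trans h0M
  apply hbig.mono_set
  have hMa : |a| ≤ M := le_trans (le_max_left _ _) (le_max_right _ _)
  have hMb : |b| ≤ M := le_trans (le_max_right _ _) (le_max_right _ _)
  have hmem : ∀ x : ℝ, |x| ≤ M → x ∈ Set.uIcc (-M) M := by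
    intro x hx
    rw [Set.uIcc_of_le (by linarith)]
    exact ⟨by linarith [neg_abs_le x], by linarith [le_abs_self x]⟩
  exact Set.uIcc_subset_uIcc (hmem a hMa) (hmem b hMb)

lemma intervalIntegrable_g (c : ℝ) (hc : c ≠ 0) (a b : ℝ) :
    IntervalIntegrable (fun v : ℝ => Real.arsinh (c / |v|)) volume a b := by
  have hm : AEStronglyMeasurable (fun v : ℝ => Real.arsinh (c / |v|))
      (volume.restrict (Set.uIoc a b)) :=
    (Real.continuous_arsinh.measurable.comp
      (measurable_const.div measurable_abs)).aestronglyMeasurable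
  apply IntervalIntegrable.mono_fun'
    (g := fun v : ℝ => Real.log (|v| + 2 * |c|) - Real.log v) ?_ hm ?_
  · have hcpos : (0 : ℝ) < 2 * |c| := by
      have := abs_pos.2 hc
      linarith
    have hcont : Continuous fun v : ℝ => Real.log (|v| + 2 * |c|) :=
      (continuous_abs.add continuous_const).log fun v =>
        ne_of_gt (add_pos_of_nonneg_of_pos (abs_nonneg v) hcpos)
    exact (hcont.intervalIntegrable a b).sub (intervalIntegrable_log_all a b)
  · have h0 : ∀ᵐ v : ℝ ∂(volume.restrict (Set.uIoc a b)), v ≠ 0 := by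
      apply ae_restrict_of_ae
      rw [ae_iff]
      simpa only [not_not, Set.setOf_eq_eq_singleton] using Real.volume_singleton
    filter_upwards [h0] with w hw
    have hw0 : 0 < |w| := abs_pos.2 hw
    have h1 : ‖Real.arsinh (c / |w|)‖ ≤ Real.log (1 + 2 * abs (c / |w|)) := abs_arsinh_le _
    have h2 : abs (c / |w|) = |c| / |w| := by
      rw [abs_div, abs_abs]
    rw [h2, log_bound c hw] at h1
    exact h1

lemma integral_g0 (c : ℝ) (hc : c ≠ 0) (b : ℝ) :
    ∫ v in (0 : ℝ)..b, Real.arsinh (c / |v|) = Fc c b := by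
  have hFc0 : Fc c 0 = 0 := by simp [Fc]
  rcases le_or_gt 0 b with hb | hb
  · rw [show Fc c b = Fc c b - Fc c 0 by rw [hFc0]; ring]
    apply intervalIntegral.integral_eq_sub_of_hasDeriv_right_of_le hb
      (continuous_Fc c hc).continuousOn
    · intro x hx
      exact (hasDerivAt_Fc c hc (ne_of_gt hx.1)).hasDerivWithinAt
    · exact intervalIntegrable_g c hc 0 b
  · rw [intervalIntegral.integral_symm, show Fc c b = -(Fc c 0 - Fc c b) by rw [hFc0]; ring]
    congr 1
    apply intervalIntegral.integral_eq_sub_of_hasDeriv_right_of_le hb.le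
      (continuous_Fc c hc).continuousOn
    · intro x hx
      exact (hasDerivAt_Fc c hc (ne_of_lt hx.2)).hasDerivWithinAt
    · exact intervalIntegrable_g c hc b 0

lemma integral_g (c : ℝ) (hc : c ≠ 0) (a b : ℝ) :
    ∫ v in a..b, Real.arsinh (c / |v|) = Fc c b - Fc c a := by
  have h1 : ∫ v in a..(0 : ℝ), Real.arsinh (c / |v|) = -Fc c a := by
    rw [intervalIntegral.integral_symm, integral_g0 c hc a]
  rw [← intervalIntegral.integral_add_adjacent_intervals
    (intervalIntegrable_g c hc a 0) (intervalIntegrable_g c hc 0 b), h1, integral_g0 c hc b]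
  ring

lemma inner_int (yj lo hi : ℝ) {a : ℝ} (ha : a ≠ 0) :
    ∫ y in lo..hi, 1 / Real.sqrt (a ^ 2 + (yj - y) ^ 2)
      = Real.arsinh ((yj - lo) / |a|) - Real.arsinh ((yj - hi) / |a|) := by
  have ha' : |a| ≠ 0 := abs_ne_zero.2 ha
  have key : ∀ y : ℝ, HasDerivAt (fun y : ℝ => -Real.arsinh ((yj - y) / |a|))
      (1 / Real.sqrt (a ^ 2 + (yj - y) ^ 2)) y := by
    intro y
    have hs : 0 < Real.sqrt (a ^ 2 + (yj - y) ^ 2) := Real.sqrt_pos.2 (by positivity)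
    have h1 : HasDerivAt (fun y : ℝ => (yj - y) / |a|) (-1 / |a|) y := by
      simpa using ((hasDerivAt_id y).const_sub yj).div_const |a|
    have h2 := h1.arsinh.neg
    refine h2.congr_deriv ?_
    have e1 : Real.sqrt (1 + ((yj - y) / |a|) ^ 2)
        = Real.sqrt (a ^ 2 + (yj - y) ^ 2) / |a| := by
      rw [show a ^ 2 + (yj - y) ^ 2 = |a| ^ 2 + (yj - y) ^ 2 by rw [sq_abs],
        sqrt_aux (yj - y) ha', abs_abs]
      field_simp
    rw [e1]
    simp only [smul_eq_mul]
    field_simp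
  have hcont : Continuous fun y : ℝ => 1 / Real.sqrt (a ^ 2 + (yj - y) ^ 2) := by
    apply continuous_const.div
    · fun_prop
    · intro y
      exact ne_of_gt (Real.sqrt_pos.2 (by positivity))
  rw [intervalIntegral.integral_eq_sub_of_hasDerivAt (fun y _ => key y)
    (hcont.intervalIntegrable lo hi)]
  ring

/-- Closed-form evaluation of the elastic deformation kernel integral over a grid cell:
the integral of `1/√((xi-x')²+(yj-y')²)` over the cell centered at `(xi', yj')` equals
the eight-term `arsinh` expression, where `x± = xi - xi' ± h/2`, `y± = yj - yj' ± h/2`. -/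
theorem kernel_integral_closed_form (xi yj xi' yj' h : ℝ) (hh : 0 < h)
    (xp xm yp ym : ℝ)
    (hxp : xp = xi - xi' + h / 2) (hxm : xm = xi - xi' - h / 2)
    (hyp : yp = yj - yj' + h / 2) (hym : ym = yj - yj' - h / 2)
    (hxp0 : xp ≠ 0) (hxm0 : xm ≠ 0) (hyp0 : yp ≠ 0) (hym0 : ym ≠ 0) :
    (∫ x' in (xi' - h / 2)..(xi' + h / 2), ∫ y' in (yj' - h / 2)..(yj' + h / 2),
        1 / Real.sqrt ((xi - x') ^ 2 + (yj - y') ^ 2)) =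
      |xp| * Real.arsinh (yp / xp) + |yp| * Real.arsinh (xp / yp)
      - |xm| * Real.arsinh (yp / xm) - |yp| * Real.arsinh (xm / yp)
      - |xp| * Real.arsinh (ym / xp) - |ym| * Real.arsinh (xp / ym)
      + |xm| * Real.arsinh (ym / xm) + |ym| * Real.arsinh (xm / ym) := by
  have hyj1 : yj - (yj' - h / 2) = yp := by rw [hyp]; ring
  have hyj2 : yj - (yj' + h / 2) = ym := by rw [hym]; ring
  have step1 : (∫ x' in (xi' - h / 2)..(xi' + h / 2), ∫ y' in (yj' - h / 2)..(yj' + h / 2),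
      1 / Real.sqrt ((xi - x') ^ 2 + (yj - y') ^ 2))
      = ∫ x' in (xi' - h / 2)..(xi' + h / 2),
          (Real.arsinh (yp / |xi - x'|) - Real.arsinh (ym / |xi - x'|)) := by
    apply intervalIntegral.integral_congr_ae
    have h0 : ∀ᵐ x' : ℝ, x' ≠ xi := by
      rw [ae_iff]
      simpa only [not_not, Set.setOf_eq_eq_singleton] using Real.volume_singleton
    filter_upwards [h0] with x' hx' _
    rw [inner_int yj _ _ (sub_ne_zero.2 (Ne.symm hx')), hyj1, hyj2]
  rw [step1]
  have hxm' : xi - (xi' + h / 2) = xm := by rw [hxm]; ring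
  have hxp' : xi - (xi' - h / 2) = xp := by rw [hxp]; ring
  have step2 : (∫ x' in (xi' - h / 2)..(xi' + h / 2),
      (Real.arsinh (yp / |xi - x'|) - Real.arsinh (ym / |xi - x'|)))
      = ∫ v in xm..xp, (Real.arsinh (yp / |v|) - Real.arsinh (ym / |v|)) := by
    rw [← hxm', ← hxp']
    exact intervalIntegral.integral_comp_sub_left
      (fun v => Real.arsinh (yp / |v|) - Real.arsinh (ym / |v|)) xi
  rw [step2, intervalIntegral.integral_sub (intervalIntegrable_g yp hyp0 xm xp)
    (intervalIntegrable_g ym hym0 xm xp), integral_g yp hyp0 xm xp, integral_g ym hym0 xm xp]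
  simp only [Fc]
  ring
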